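/- USN of the edgeless graph on n vertices equals 1 + ⌈log₂ n⌉ for n ≥ 2. -/

import Mathlib

/-- A disjointness labelling of `G`: an injective assignment of nonempty
finite subsets of the universe `U` to vertices, such that two distinct
vertices are adjacent iff their labels are disjoint. -/
def IsDisjLabelling {V U : Type*} (G : SimpleGraph V) (ℓ : V → Finset U) : Prop :=
  Function.Injective ℓ ∧ (∀ v, (ℓ v).Nonempty) ∧
    ∀ u v : V, u ≠ v → (G.Adj u v ↔ Disjoint (ℓ u) (ℓ v))

/-- The universe size number: the minimum size of a universe admitting a
disjointness labelling of `G`. -/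
noncomputable def USN {V : Type*} (G : SimpleGraph V) : ℕ :=
  sInf {m : ℕ | ∃ ℓ : V → Finset (Fin m), IsDisjLabelling G ℓ}

/-- The USN of the edgeless graph on `n ≥ 2` vertices equals `1 + ⌈log₂ n⌉`. -/
theorem stmt7 (n : ℕ) (hn : 2 ≤ n) :
    USN (⊥ : SimpleGraph (Fin n)) = 1 + Nat.clog 2 n := by
  set k := Nat.clog 2 n with hk
  apply le_antisymm
  · -- upper bound: exhibit a labelling with universe Fin (1 + k)
    apply Nat.sInf_le
    have hcard : Fintype.card (Fin n) ≤ Fintype.card (Finset (Fin k)) := by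
      rw [Fintype.card_fin, Fintype.card_finset, Fintype.card_fin]
      exact Nat.le_pow_clog (by norm_num) n
    obtain ⟨f⟩ := Function.Embedding.nonempty_of_card_le hcard
    have hpos : 0 < 1 + k := by omega
    let z : Fin (1 + k) := ⟨0, hpos⟩
    let g : Fin k ↪ Fin (1 + k) := ⟨fun i => ⟨i + 1, by omega⟩, by
      intro a b hab
      simpa [Fin.ext_iff] using hab⟩
    refine ⟨fun v => insert z ((f v).map g), ?_, ?_, ?_⟩
    · intro u v huv
      have hz : ∀ w : Fin n, z ∉ (f w).map g := by
        intro w hw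
        obtain ⟨i, _, hi⟩ := Finset.mem_map.mp hw
        have : (i : ℕ) + 1 = 0 := congrArg Fin.val hi
        omega
      have h1 : insert z ((f u).map g) = insert z ((f v).map g) := huv
      have : ((f u).map g) = ((f v).map g) := by
        apply Finset.ext
        intro x
        constructor <;> intro hx
        · have hxz : x ≠ z := fun h => hz u (h ▸ hx)
          have : x ∈ insert z ((f v).map g) := h1 ▸ Finset.mem_insert_of_mem hx
          rcases Finset.mem_insert.mp this with h | h
          · exact absurd h hxz
          · exact h
        · have hxz : x ≠ z := fun h => hz v (h ▸ hx)
          have : x ∈ insert z ((f u).map g) := h1.symm ▸ Finset.mem_insert_of_mem hx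
          rcases Finset.mem_insert.mp this with h | h
          · exact absurd h hxz
          · exact h
      have : f u = f v := Finset.map_injective g this
      exact f.injective this
    · intro v; exact ⟨z, Finset.mem_insert_self _ _⟩
    · intro u v huv
      simp only [SimpleGraph.bot_adj, false_iff]
      intro hd
      exact (Finset.disjoint_left.mp hd (Finset.mem_insert_self z _))
        (Finset.mem_insert_self z _)
  · -- lower bound
    apply le_csInf
    · -- the set is nonempty (use the upper-bound labelling again, abstractly:
      have hcard : Fintype.card (Fin n) ≤ Fintype.card (Finset (Fin k)) := by
        rw [Fintype.card_fin, Fintype.card_finset, Fintype.card_fin]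
        exact Nat.le_pow_clog (by norm_num) n
      obtain ⟨f⟩ := Function.Embedding.nonempty_of_card_le hcard
      have hpos : 0 < 1 + k := by omega
      let z : Fin (1 + k) := ⟨0, hpos⟩
      let g : Fin k ↪ Fin (1 + k) := ⟨fun i => ⟨i + 1, by omega⟩, by
        intro a b hab; simpa [Fin.ext_iff] using hab⟩
      refine ⟨1 + k, fun v => insert z ((f v).map g), ?_, ?_, ?_⟩
      · intro u v huv
        have hz : ∀ w : Fin n, z ∉ (f w).map g := by
          intro w hw
          obtain ⟨i, _, hi⟩ := Finset.mem_map.mp hw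
          have : (i : ℕ) + 1 = 0 := congrArg Fin.val hi
          omega
        have h1 : insert z ((f u).map g) = insert z ((f v).map g) := huv
        have : ((f u).map g) = ((f v).map g) := by
          apply Finset.ext
          intro x
          constructor <;> intro hx
          · have hxz : x ≠ z := fun h => hz u (h ▸ hx)
            have : x ∈ insert z ((f v).map g) := h1 ▸ Finset.mem_insert_of_mem hx
            rcases Finset.mem_insert.mp this with h | h
            · exact absurd h hxz
            · exact h
          · have hxz : x ≠ z := fun h => hz v (h ▸ hx)
            have : x ∈ insert z ((f u).map g) := h1.symm ▸ Finset.mem_insert_of_mem hx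
            rcases Finset.mem_insert.mp this with h | h
            · exact absurd h hxz
            · exact h
        exact f.injective (Finset.map_injective g this)
      · intro v; exact ⟨z, Finset.mem_insert_self _ _⟩
      · intro u v huv
        simp only [SimpleGraph.bot_adj, false_iff]
        intro hd
        exact (Finset.disjoint_left.mp hd (Finset.mem_insert_self z _))
          (Finset.mem_insert_self z _)
    · rintro m ⟨ℓ, hinj, hne, hadj⟩
      -- m ≥ 1
      have hm1 : 1 ≤ m := by
        by_contra h
        push_neg at h
        interval_cases m
        obtain ⟨x, _⟩ := hne ⟨0, by omega⟩
        exact x.elim0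
      -- labels are pairwise non-disjoint
      have hnd : ∀ u v : Fin n, ¬ Disjoint (ℓ u) (ℓ v) := by
        intro u v hd
        by_cases huv : u = v
        · subst huv
          exact (hne u).ne_empty (by simpa using disjoint_self.mp hd)
        · exact (by simpa using (hadj u v huv).mpr hd : False)
      -- family F and its complement family are disjoint
      set F : Finset (Finset (Fin m)) := Finset.univ.image ℓ with hF
      have hFcard : F.card = n := by
        rw [hF, Finset.card_image_of_injective _ hinj, Finset.card_univ, Fintype.card_fin]
      set Fc : Finset (Finset (Fin m)) := F.image compl with hFc
      have hFccard : Fc.card = n := by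
        rw [hFc, Finset.card_image_of_injective _ compl_injective, hFcard]
      have hdisj : Disjoint F Fc := by
        rw [Finset.disjoint_left]
        rintro A hA hAc
        obtain ⟨B, hB, hBA⟩ := Finset.mem_image.mp hAc
        obtain ⟨u, _, hu⟩ := Finset.mem_image.mp hA
        obtain ⟨v, _, hv⟩ := Finset.mem_image.mp hB
        apply hnd u v
        have : ℓ u = (ℓ v)ᶜ := by rw [hu, hv, hBA]
        rw [this]
        exact disjoint_compl_left
      have hcard : (F ∪ Fc).card ≤ 2 ^ m := by
        calc (F ∪ Fc).card ≤ Finset.univ.card := Finset.card_le_univ _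
          _ = 2 ^ m := by rw [Finset.card_univ, Fintype.card_finset, Fintype.card_fin]
      rw [Finset.card_union_of_disjoint hdisj, hFcard, hFccard] at hcard
      have h2 : n ≤ 2 ^ (m - 1) := by
        have : 2 ^ m = 2 * 2 ^ (m - 1) := by
          rw [← pow_succ']
          congr 1
          omega
        omega
      have := (Nat.clog_le_iff_le_pow (by norm_num)).mpr h2
      omega
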